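/- arXiv:1311.7063 — 2 statements merged into one kernel-verified Lean document; each statement's English description precedes it below -/
import Mathlib

section
/- Let p, q ∈ [0,1] and let X₁, ..., Xₙ be {0,1}-valued random variables with X := Σᵢ Xᵢ. If for each 1 ≤ i ≤ n we have E[Xᵢ | X₁, ..., X_{i-1}] ≥ p and E[Xᵢ | X₁, ..., X_{i-1}] ≤ q (almost surely), then for every 0 < α < 1: Pr[X ≥ (1+α)nq] ≤ exp(−α²nq/3) and Pr[X ≤ (1−α)np] ≤ exp(−α²np/2). -/
open MeasureTheory


lemma an1 {x : ℝ} (hx0 : 0 ≤ x) (hx1 : x ≤ 1) : 2 * x / (2 + x) ≤ Real.log (1 + x) := by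
  set f : ℝ → ℝ := fun y => Real.log (1 + y) - 2 * y / (2 + y) with hf
  have hder : ∀ y : ℝ, 0 ≤ y → HasDerivAt f (1 / (1 + y) - (2 * (2 + y) - 2 * y * 1) / (2 + y) ^ 2) y := by
    intro y hy
    have h1 : HasDerivAt (fun z : ℝ => 1 + z) 1 y := by
      simpa using (hasDerivAt_id y).const_add 1
    have h1' : HasDerivAt (fun z : ℝ => Real.log (1 + z)) (1 / (1 + y)) y := by
      simpa using h1.log (by linarith)
    have h2 : HasDerivAt (fun z : ℝ => 2 * z) 2 y := by
      simpa using (hasDerivAt_id y).const_mul 2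
    have h3 : HasDerivAt (fun z : ℝ => 2 + z) 1 y := by
      simpa using (hasDerivAt_id y).const_add 2
    exact h1'.sub (h2.div h3 (by linarith))
  have hmono : MonotoneOn f (Set.Icc 0 1) := by
    apply monotoneOn_of_deriv_nonneg (convex_Icc 0 1)
    · intro y hy
      exact ((hder y hy.1).continuousAt).continuousWithinAt
    · intro y hy
      rw [interior_Icc] at hy
      exact ((hder y hy.1.le).differentiableAt).differentiableWithinAt
    · intro y hy
      rw [interior_Icc] at hy
      obtain ⟨hyl, hyr⟩ := hy
      rw [(hder y hyl.le).deriv]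
      have hy2 : (0:ℝ) < 2 + y := by linarith
      have hy1 : (0:ℝ) < 1 + y := by linarith
      rw [sub_nonneg, div_le_div_iff₀ (by positivity) hy1]
      nlinarith [sq_nonneg y]
  have h := hmono (Set.mem_Icc.mpr ⟨le_refl 0, zero_le_one⟩) (Set.mem_Icc.mpr ⟨hx0, hx1⟩) hx0
  have hf0 : f 0 = 0 := by simp [hf]
  rw [hf0] at h
  simp only [hf] at h
  linarith

lemma an2 {x : ℝ} (hx0 : 0 < x) (hx1 : x ≤ 1) : x / 2 - 1 / (2 * x) ≤ Real.log x := by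
  set f : ℝ → ℝ := fun y => Real.log y - y / 2 + 1 / (2 * y) with hf
  have hder : ∀ y : ℝ, 0 < y → HasDerivAt f (1 / y - 1 / 2 + (0 * (2 * y) - 1 * 2) / (2 * y) ^ 2) y := by
    intro y hy
    have h1 : HasDerivAt (fun z : ℝ => Real.log z) (1/y) y := by
      simpa [one_div] using Real.hasDerivAt_log (ne_of_gt hy)
    have h2 : HasDerivAt (fun z : ℝ => z / 2) (1 / 2) y := by
      simpa using (hasDerivAt_id y).div_const 2
    have h3 : HasDerivAt (fun z : ℝ => 2 * z) 2 y := by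
      simpa using (hasDerivAt_id y).const_mul 2
    have h4 : HasDerivAt (fun z : ℝ => 1 / (2 * z)) ((0 * (2 * y) - 1 * 2) / (2 * y) ^ 2) y :=
      (hasDerivAt_const y 1).div h3 (by positivity)
    exact (h1.sub h2).add h4
  have hanti : AntitoneOn f (Set.Icc x 1) := by
    apply antitoneOn_of_deriv_nonpos (convex_Icc x 1)
    · intro y hy
      exact ((hder y (lt_of_lt_of_le hx0 hy.1)).continuousAt).continuousWithinAt
    · intro y hy
      rw [interior_Icc] at hy
      exact ((hder y (lt_of_lt_of_le hx0 hy.1.le)).differentiableAt).differentiableWithinAt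
    · intro y hy
      rw [interior_Icc] at hy
      have hyy : 0 < y := lt_of_lt_of_le hx0 hy.1.le
      rw [(hder y hyy).deriv]
      have heq : 1 / y - 1 / 2 + (0 * (2 * y) - 1 * 2) / (2 * y) ^ 2 = -((y - 1) ^ 2 / (2 * y ^ 2)) := by
        field_simp
        ring
      rw [heq, neg_nonpos]
      positivity
  have h := hanti (Set.mem_Icc.mpr ⟨le_refl x, hx1⟩) (Set.mem_Icc.mpr ⟨hx1, le_refl 1⟩) hx1
  have hf1 : f 1 = 0 := by
    simp only [hf, Real.log_one, mul_one]
    norm_num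
  rw [hf1] at h
  simp only [hf] at h
  linarith

open MeasureTheory Finset

lemma step_aux {Ω : Type*} {m : MeasurableSpace Ω} [m0 : MeasurableSpace Ω]
    (hm : m ≤ m0) (μ : Measure Ω) [IsProbabilityMeasure μ]
    (Z W : Ω → ℝ) (hZm : StronglyMeasurable[m] Z)
    (hW : Integrable W μ) (hZW : Integrable (Z * W) μ) :
    ∫ ω, Z ω * W ω ∂μ = ∫ ω, Z ω * (μ[W | m]) ω ∂μ := by
  have h1 : ∫ ω, (Z * W) ω ∂μ = ∫ ω, (Z * (μ[W | m])) ω ∂μ := by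
    rw [← integral_condExp hm (f := Z * W)]
    exact integral_congr_ae (condExp_mul_of_stronglyMeasurable_left hZm hZW hW)
  simpa [Pi.mul_apply] using h1

lemma key_bound {Ω : Type*} [MeasurableSpace Ω] (μ : Measure Ω) [IsProbabilityMeasure μ]
    (n : ℕ) (X : ℕ → Ω → ℝ)
    (hX01 : ∀ i < n, ∀ ω, X i ω = 0 ∨ X i ω = 1)
    (hXmeas : ∀ i < n, Measurable (X i))
    (c r : ℝ) (hc : -1 ≤ c) (hr : 0 ≤ 1 + c * r)
    (hcond : ∀ i < n, ∀ᵐ ω ∂μ,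
      c * (μ[X i | ⨆ j : {j : ℕ // j < i}, MeasurableSpace.comap (X j) inferInstance]) ω ≤ c * r) :
    ∫ ω, ∏ i ∈ Finset.range n, (1 + c * X i ω) ∂μ ≤ (1 + c * r) ^ n := by
  induction n with
  | zero => simp
  | succ n ih =>
    have hlt : n < n + 1 := Nat.lt_succ_self n
    set Z : Ω → ℝ := fun ω => ∏ i ∈ Finset.range n, (1 + c * X i ω) with hZ_def
    have hm : (⨆ j : {j : ℕ // j < n}, MeasurableSpace.comap (X j) inferInstance)
        ≤ ‹MeasurableSpace Ω› := by
      refine iSup_le fun j => ?_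
      exact measurable_iff_comap_le.mp (hXmeas j (j.2.trans hlt))
    have hXm : ∀ i, i < n →
        Measurable[⨆ j : {j : ℕ // j < n}, MeasurableSpace.comap (X j) inferInstance] (X i) := by
      intro i hi
      have base : Measurable[MeasurableSpace.comap (X i) inferInstance] (X i) :=
        measurable_iff_comap_le.mpr le_rfl
      exact base.mono
        (le_iSup (fun j : {j : ℕ // j < n} =>
          MeasurableSpace.comap (X j.1) inferInstance) ⟨i, hi⟩) le_rfl
    have hZm : Measurable[⨆ j : {j : ℕ // j < n},
        MeasurableSpace.comap (X j) inferInstance] Z := by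
      apply Finset.measurable_prod
      intro i hi
      exact measurable_const.add (measurable_const.mul (hXm i (Finset.mem_range.mp hi)))
    have hZmeas : Measurable Z := hZm.mono hm le_rfl
    have hfac : ∀ i, i < n + 1 → ∀ ω, 0 ≤ 1 + c * X i ω ∧ 1 + c * X i ω ≤ 1 + |c| := by
      intro i hi ω
      rcases hX01 i hi ω with h | h <;> rw [h]
      · constructor
        · norm_num
        · have := abs_nonneg c
          rw [mul_zero]
          linarith
      · constructor
        · rw [mul_one]; linarith
        · have := le_abs_self c
          rw [mul_one]
          linarith
    have hZ0 : ∀ ω, 0 ≤ Z ω := by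
      intro ω
      exact Finset.prod_nonneg fun i hi => (hfac i ((Finset.mem_range.mp hi).trans hlt) ω).1
    have hZbd : ∀ ω, Z ω ≤ (1 + |c|) ^ n := by
      intro ω
      have := Finset.prod_le_prod (f := fun i => 1 + c * X i ω) (g := fun _ => 1 + |c|)
        (fun i hi => (hfac i ((Finset.mem_range.mp hi).trans hlt) ω).1)
        (fun i hi => (hfac i ((Finset.mem_range.mp hi).trans hlt) ω).2)
      simpa [Finset.prod_const] using this
    have hZnorm : ∀ ω, ‖Z ω‖ ≤ (1 + |c|) ^ n := by
      intro ω
      rw [Real.norm_eq_abs, abs_of_nonneg (hZ0 ω)]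
      exact hZbd ω
    have hZint : Integrable Z μ :=
      (integrable_const ((1 + |c|) ^ n)).mono' hZmeas.aestronglyMeasurable (ae_of_all _ hZnorm)
    have hXnint : Integrable (X n) μ := by
      refine (integrable_const (1:ℝ)).mono' (hXmeas n hlt).aestronglyMeasurable (ae_of_all _ ?_)
      intro ω
      rcases hX01 n hlt ω with h | h <;> simp [h]
    have hZXint : Integrable (Z * X n) μ := hXnint.bdd_mul hZmeas.aestronglyMeasurable (ae_of_all _ hZnorm)
    set E : Ω → ℝ :=
      (μ[X n | ⨆ j : {j : ℕ // j < n}, MeasurableSpace.comap (X j) inferInstance]) with hE_def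
    have hpull : ∫ ω, Z ω * X n ω ∂μ = ∫ ω, Z ω * E ω ∂μ :=
      step_aux hm μ Z (X n) hZm.stronglyMeasurable hXnint hZXint
    have hEint : Integrable (fun ω => Z ω * E ω) μ := by
      have : Integrable E μ := integrable_condExp
      exact this.bdd_mul hZmeas.aestronglyMeasurable (ae_of_all _ hZnorm)
    have hstep : ∫ ω, c * (Z ω * E ω) ∂μ ≤ ∫ ω, Z ω * (c * r) ∂μ := by
      apply integral_mono_ae (hEint.const_mul c) (hZint.mul_const (c * r))
      filter_upwards [hcond n hlt] with ω hω
      calc c * (Z ω * E ω) = Z ω * (c * E ω) := by ring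
        _ ≤ Z ω * (c * r) := mul_le_mul_of_nonneg_left hω (hZ0 ω)
    have hZI : 0 ≤ ∫ ω, Z ω ∂μ := integral_nonneg hZ0
    have ihZ : ∫ ω, Z ω ∂μ ≤ (1 + c * r) ^ n :=
      ih (fun i hi ω => hX01 i (hi.trans hlt) ω) (fun i hi => hXmeas i (hi.trans hlt))
        (fun i hi => hcond i (hi.trans hlt))
    calc ∫ ω, ∏ i ∈ Finset.range (n + 1), (1 + c * X i ω) ∂μ
        = ∫ ω, (Z ω + c * (Z ω * X n ω)) ∂μ := by
          apply integral_congr_ae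
          apply ae_of_all
          intro ω
          simp only [Finset.prod_range_succ]
          ring
      _ = (∫ ω, Z ω ∂μ) + ∫ ω, c * (Z ω * X n ω) ∂μ :=
          integral_add hZint (hZXint.const_mul c)
      _ = (∫ ω, Z ω ∂μ) + ∫ ω, c * (Z ω * E ω) ∂μ := by
          rw [integral_const_mul, integral_const_mul, hpull]
      _ ≤ (∫ ω, Z ω ∂μ) + ∫ ω, Z ω * (c * r) ∂μ := by linarith [hstep]
      _ = (1 + c * r) * ∫ ω, Z ω ∂μ := by
          rw [integral_mul_const]
          ring
      _ ≤ (1 + c * r) * (1 + c * r) ^ n := mul_le_mul_of_nonneg_left ihZ hr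
      _ = (1 + c * r) ^ (n + 1) := by ring

open MeasureTheory Finset

section
variable {Ω : Type*} [MeasurableSpace Ω] (μ : Measure Ω) [IsProbabilityMeasure μ]

lemma markov_prod (n : ℕ) (X : ℕ → Ω → ℝ)
    (hX01 : ∀ i < n, ∀ ω, X i ω = 0 ∨ X i ω = 1)
    (hXmeas : ∀ i < n, Measurable (X i))
    (c r : ℝ) (hc : -1 ≤ c) (hr : 0 ≤ 1 + c * r)
    (hcond : ∀ i < n, ∀ᵐ ω ∂μ,
      c * (μ[X i | ⨆ j : {j : ℕ // j < i}, MeasurableSpace.comap (X j) inferInstance]) ω ≤ c * r)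
    (ε : ℝ) :
    (μ {ω | Real.exp ε ≤ ∏ i ∈ Finset.range n, (1 + c * X i ω)}).toReal ≤
      Real.exp ((n : ℝ) * (c * r) - ε) := by
  have hfac : ∀ i, i < n → ∀ ω, 0 ≤ 1 + c * X i ω ∧ 1 + c * X i ω ≤ 1 + |c| := by
    intro i hi ω
    rcases hX01 i hi ω with h | h <;> rw [h]
    · constructor
      · norm_num
      · have := abs_nonneg c; rw [mul_zero]; linarith
    · constructor
      · rw [mul_one]; linarith
      · have := le_abs_self c; rw [mul_one]; linarith
  set f : Ω → ℝ := fun ω => ∏ i ∈ Finset.range n, (1 + c * X i ω) with hfdef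
  have hf0 : ∀ ω, 0 ≤ f ω := fun ω =>
    Finset.prod_nonneg fun i hi => (hfac i (Finset.mem_range.mp hi) ω).1
  have hfbd : ∀ ω, f ω ≤ (1 + |c|) ^ n := by
    intro ω
    have := Finset.prod_le_prod (f := fun i => 1 + c * X i ω) (g := fun _ => 1 + |c|)
      (fun i hi => (hfac i (Finset.mem_range.mp hi) ω).1)
      (fun i hi => (hfac i (Finset.mem_range.mp hi) ω).2)
    simpa [Finset.prod_const] using this
  have hfmeas : Measurable f := by
    apply Finset.measurable_prod
    intro i hi
    exact measurable_const.add (measurable_const.mul (hXmeas i (Finset.mem_range.mp hi)))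
  have hfint : Integrable f μ := by
    refine (integrable_const ((1 + |c|) ^ n)).mono' hfmeas.aestronglyMeasurable (ae_of_all _ ?_)
    intro ω
    rw [Real.norm_eq_abs, abs_of_nonneg (hf0 ω)]
    exact hfbd ω
  have hint : ∫ ω, f ω ∂μ ≤ (1 + c * r) ^ n := key_bound μ n X hX01 hXmeas c r hc hr hcond
  have hpow : (1 + c * r) ^ n ≤ Real.exp ((n : ℝ) * (c * r)) := by
    have h1 : 1 + c * r ≤ Real.exp (c * r) := by
      have := Real.add_one_le_exp (c * r); linarith
    calc (1 + c * r) ^ n ≤ (Real.exp (c * r)) ^ n := pow_le_pow_left₀ hr h1 n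
      _ = Real.exp ((n : ℝ) * (c * r)) := by rw [← Real.exp_nat_mul]
  have hεpos : (0 : ℝ) < Real.exp ε := Real.exp_pos _
  have hmarkov := mul_meas_ge_le_integral_of_nonneg (μ := μ) (ae_of_all _ hf0) hfint (Real.exp ε)
  have hfinal : Real.exp ε * (μ {ω | Real.exp ε ≤ f ω}).toReal ≤ Real.exp ((n : ℝ) * (c * r)) :=
    hmarkov.trans (hint.trans hpow)
  rw [Real.exp_sub, le_div_iff₀ hεpos]
  calc (μ {ω | Real.exp ε ≤ ∏ i ∈ Finset.range n, (1 + c * X i ω)}).toReal * Real.exp ε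
      = Real.exp ε * (μ {ω | Real.exp ε ≤ f ω}).toReal := by rw [mul_comm]
    _ ≤ Real.exp ((n : ℝ) * (c * r)) := hfinal

end



/-- **Lemma (Chernoff bound with conditional expectations).** Let `X₁, …, Xₙ` be
`{0,1}`-valued random variables and `X = ∑ Xᵢ`. If, for each `i`, the
conditional expectation of `Xᵢ` given `X₁, …, X_{i-1}` is a.s. at least `p` and
at most `q`, then for every `0 < α < 1`,
`Pr[X ≥ (1+α)nq] ≤ exp(-α²nq/3)` and `Pr[X ≤ (1-α)np] ≤ exp(-α²np/2)`. -/
theorem chernoff_conditional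
    {Ω : Type*} [MeasurableSpace Ω] (μ : Measure Ω) [IsProbabilityMeasure μ]
    (n : ℕ) (X : ℕ → Ω → ℝ)
    (hX01 : ∀ i < n, ∀ ω, X i ω = 0 ∨ X i ω = 1)
    (hXmeas : ∀ i < n, Measurable (X i))
    (p q : ℝ) (hp0 : 0 ≤ p) (hp1 : p ≤ 1) (hq0 : 0 ≤ q) (hq1 : q ≤ 1)
    (hlow : ∀ i < n, ∀ᵐ ω ∂μ,
      p ≤ (μ[X i | ⨆ j : {j : ℕ // j < i}, MeasurableSpace.comap (X j) inferInstance]) ω)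
    (hhigh : ∀ i < n, ∀ᵐ ω ∂μ,
      (μ[X i | ⨆ j : {j : ℕ // j < i}, MeasurableSpace.comap (X j) inferInstance]) ω ≤ q)
    (α : ℝ) (hα0 : 0 < α) (hα1 : α < 1) :
    (μ {ω | (1 + α) * n * q ≤ ∑ i ∈ Finset.range n, X i ω}).toReal ≤
        Real.exp (-(α ^ 2 * n * q) / 3) ∧
      (μ {ω | ∑ i ∈ Finset.range n, X i ω ≤ (1 - α) * n * p}).toReal ≤
        Real.exp (-(α ^ 2 * n * p) / 2) := by
  constructor
  · -- upper tail
    have hL0 : 0 ≤ Real.log (1 + α) := Real.log_nonneg (by linarith)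
    have hcond' : ∀ i < n, ∀ᵐ ω ∂μ,
        α * (μ[X i | ⨆ j : {j : ℕ // j < i},
          MeasurableSpace.comap (X j) inferInstance]) ω ≤ α * q := by
      intro i hi
      filter_upwards [hhigh i hi] with ω hω
      exact mul_le_mul_of_nonneg_left hω hα0.le
    have hmp := markov_prod μ n X hX01 hXmeas α q (by linarith) (by positivity) hcond'
      (Real.log (1 + α) * ((1 + α) * n * q))
    have hsub : {ω | (1 + α) * n * q ≤ ∑ i ∈ Finset.range n, X i ω} ⊆
        {ω | Real.exp (Real.log (1 + α) * ((1 + α) * n * q)) ≤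
          ∏ i ∈ Finset.range n, (1 + α * X i ω)} := by
      intro ω hω
      simp only [Set.mem_setOf_eq] at hω ⊢
      have hexp : ∏ i ∈ Finset.range n, (1 + α * X i ω)
          = Real.exp (Real.log (1 + α) * ∑ i ∈ Finset.range n, X i ω) := by
        rw [Finset.mul_sum, Real.exp_sum]
        apply Finset.prod_congr rfl
        intro i hi
        rcases hX01 i (Finset.mem_range.mp hi) ω with h | h <;> rw [h]
        · simp
        · rw [mul_one, mul_one, Real.exp_log (by linarith)]
      rw [hexp]
      exact Real.exp_le_exp.mpr (mul_le_mul_of_nonneg_left hω hL0)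
    have hmono := ENNReal.toReal_mono (measure_ne_top μ _) (measure_mono hsub)
    refine (hmono.trans hmp).trans (Real.exp_le_exp.mpr ?_)
    have hlog := an1 hα0.le hα1.le
    have h2a : (0:ℝ) < 2 + α := by linarith
    have hB : α + α ^ 2 / 3 ≤ (1 + α) * (2 * α / (2 + α)) := by
      rw [show (1 + α) * (2 * α / (2 + α)) = ((1 + α) * (2 * α)) / (2 + α) by ring,
        le_div_iff₀ h2a]
      nlinarith [mul_nonneg (sq_nonneg α) (by linarith : (0:ℝ) ≤ 1 - α)]
    have hkey : α - (1 + α) * Real.log (1 + α) ≤ -(α ^ 2) / 3 := by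
      have := mul_le_mul_of_nonneg_left hlog (by linarith : (0:ℝ) ≤ 1 + α)
      linarith
    have hnq : (0:ℝ) ≤ (n : ℝ) * q := by positivity
    calc (n : ℝ) * (α * q) - Real.log (1 + α) * ((1 + α) * n * q)
        = ((n : ℝ) * q) * (α - (1 + α) * Real.log (1 + α)) := by ring
      _ ≤ ((n : ℝ) * q) * (-(α ^ 2) / 3) := mul_le_mul_of_nonneg_left hkey hnq
      _ = -(α ^ 2 * n * q) / 3 := by ring
  · -- lower tail
    have h1α : (0:ℝ) < 1 - α := by linarith
    have hL0 : Real.log (1 - α) ≤ 0 := Real.log_nonpos (by linarith) (by linarith)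
    have hcond' : ∀ i < n, ∀ᵐ ω ∂μ,
        (-α) * (μ[X i | ⨆ j : {j : ℕ // j < i},
          MeasurableSpace.comap (X j) inferInstance]) ω ≤ (-α) * p := by
      intro i hi
      filter_upwards [hlow i hi] with ω hω
      nlinarith
    have hαp : α * p ≤ 1 := by nlinarith
    have hmp := markov_prod μ n X hX01 hXmeas (-α) p (by linarith) (by nlinarith) hcond'
      (Real.log (1 - α) * ((1 - α) * n * p))
    have hsub : {ω | ∑ i ∈ Finset.range n, X i ω ≤ (1 - α) * n * p} ⊆
        {ω | Real.exp (Real.log (1 - α) * ((1 - α) * n * p)) ≤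
          ∏ i ∈ Finset.range n, (1 + (-α) * X i ω)} := by
      intro ω hω
      simp only [Set.mem_setOf_eq] at hω ⊢
      have hexp : ∏ i ∈ Finset.range n, (1 + (-α) * X i ω)
          = Real.exp (Real.log (1 - α) * ∑ i ∈ Finset.range n, X i ω) := by
        rw [Finset.mul_sum, Real.exp_sum]
        apply Finset.prod_congr rfl
        intro i hi
        rcases hX01 i (Finset.mem_range.mp hi) ω with h | h <;> rw [h]
        · simp
        · rw [mul_one, mul_one, Real.exp_log h1α]
          ring
      rw [hexp]
      exact Real.exp_le_exp.mpr (mul_le_mul_of_nonpos_left hω hL0)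
    have hmono := ENNReal.toReal_mono (measure_ne_top μ _) (measure_mono hsub)
    refine (hmono.trans hmp).trans (Real.exp_le_exp.mpr ?_)
    have hlog := an2 h1α (by linarith)
    have hkey : -α - (1 - α) * Real.log (1 - α) ≤ -(α ^ 2) / 2 := by
      have hm := mul_le_mul_of_nonneg_left hlog h1α.le
      have heq : (1 - α) * ((1 - α) / 2 - 1 / (2 * (1 - α))) = (1 - α) ^ 2 / 2 - 1 / 2 := by
        field_simp
      rw [heq] at hm
      nlinarith [hm]
    have hnp : (0:ℝ) ≤ (n : ℝ) * p := by positivity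
    calc (n : ℝ) * ((-α) * p) - Real.log (1 - α) * ((1 - α) * n * p)
        = ((n : ℝ) * p) * (-α - (1 - α) * Real.log (1 - α)) := by ring
      _ ≤ ((n : ℝ) * p) * (-(α ^ 2) / 2) := mul_le_mul_of_nonneg_left hkey hnp
      _ = -(α ^ 2 * n * p) / 2 := by ring
end

section
/- Let G be a graph on n vertices with maximum degree at most Δ, where Δ ≥ 2, and let d be a positive integer such that d·n ≥ 2|E(G)|. Then for any positive integer k, G contains a k-independent set U consisting of vertices of degree at most d in G, with |U| ≥ n/((d+1)·d·Δ^k). -/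
open Filter
attribute [local instance] Classical.propDecidable

/-- Number of edges of a simple graph (no decidability assumptions needed). -/
noncomputable def edgeCount {V : Type*} (G : SimpleGraph V) : ℕ := Nat.card G.edgeSet

/-- A set `S` is `k`-independent in `G`: any two distinct vertices of `S` are at
distance at least `k+1` (every walk between them has length greater than `k`). -/
def KIndep {V : Type*} (G : SimpleGraph V) (k : ℕ) (S : Set V) : Prop :=
  ∀ u ∈ S, ∀ v ∈ S, u ≠ v → ∀ W : G.Walk u v, k < W.length

section Aux

variable {V : Type*} [Fintype V] (G : SimpleGraph V)

/-- sphere of radius exactly `i` around `u` (endpoints of walks of length `i`). -/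
noncomputable def sph (u : V) (i : ℕ) : Finset V :=
  Finset.univ.filter (fun v => ∃ p : G.Walk u v, p.length = i)

lemma sph_zero (u : V) : sph G u 0 = {u} := by
  ext v
  simp only [sph, Finset.mem_filter, Finset.mem_univ, true_and, Finset.mem_singleton]
  constructor
  · rintro ⟨p, hp⟩
    exact (SimpleGraph.Walk.eq_of_length_eq_zero hp).symm
  · rintro rfl
    exact ⟨SimpleGraph.Walk.nil, rfl⟩

lemma sph_succ_subset (u : V) (i : ℕ) [DecidableRel G.Adj] :
    sph G u (i + 1) ⊆ (sph G u i).biUnion (fun w => G.neighborFinset w) := by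
  intro v hv
  simp only [sph, Finset.mem_filter, Finset.mem_univ, true_and] at hv
  obtain ⟨p, hp⟩ := hv
  have hq : p.reverse.length = i + 1 := by rw [SimpleGraph.Walk.length_reverse]; exact hp
  cases hq' : p.reverse with
  | nil => rw [hq'] at hq; simp at hq
  | @cons _ w _ h q =>
    rw [hq'] at hq
    simp only [SimpleGraph.Walk.length_cons, Nat.add_right_cancel_iff] at hq
    refine Finset.mem_biUnion.2 ⟨w, ?_, ?_⟩
    · simp only [sph, Finset.mem_filter, Finset.mem_univ, true_and]
      exact ⟨q.reverse, by rw [SimpleGraph.Walk.length_reverse]; exact hq⟩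
    · rw [SimpleGraph.mem_neighborFinset]
      exact h.symm

lemma sph_card_le (Δ d : ℕ)
    (hmax : ∀ v : V, Nat.card (G.neighborSet v) ≤ Δ)
    (u : V) (hu : Nat.card (G.neighborSet u) ≤ d) :
    ∀ i, 1 ≤ i → (sph G u i).card ≤ d * Δ ^ (i - 1) := by
  haveI : DecidableRel G.Adj := fun _ _ => Classical.propDecidable _
  have hdeg : ∀ v : V, (G.neighborFinset v).card = Nat.card (G.neighborSet v) := by
    intro v
    rw [Nat.card_eq_fintype_card]
    exact Set.toFinset_card _
  intro i
  induction i with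
  | zero => omega
  | succ n ih =>
    intro _
    rcases Nat.eq_zero_or_pos n with rfl | hn
    · -- i = 1 : sphere is contained in neighbors of u
      have hsub : sph G u 1 ⊆ G.neighborFinset u := by
        have := sph_succ_subset G u 0
        rw [sph_zero] at this
        simpa using this
      calc (sph G u 1).card ≤ (G.neighborFinset u).card := Finset.card_le_card hsub
        _ ≤ d := by rw [hdeg]; exact hu
        _ = d * Δ ^ (1 - 1) := by simp
    · have h1 : (sph G u (n + 1)).card ≤ (sph G u n).card * Δ := by
        calc (sph G u (n + 1)).card
            ≤ ((sph G u n).biUnion (fun w => G.neighborFinset w)).card :=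
              Finset.card_le_card (sph_succ_subset G u n)
          _ ≤ ∑ w ∈ sph G u n, (G.neighborFinset w).card := Finset.card_biUnion_le
          _ ≤ ∑ _w ∈ sph G u n, Δ := Finset.sum_le_sum (fun w _ => by rw [hdeg]; exact hmax w)
          _ = (sph G u n).card * Δ := by rw [Finset.sum_const, smul_eq_mul]
      have h2 := ih hn
      calc (sph G u (n + 1)).card ≤ (sph G u n).card * Δ := h1
        _ ≤ d * Δ ^ (n - 1) * Δ := Nat.mul_le_mul_right Δ h2
        _ = d * Δ ^ (n - 1 + 1) := by ring
        _ = d * Δ ^ (n + 1 - 1) := by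
              have : n - 1 + 1 = n + 1 - 1 := by omega
              rw [this]

lemma geom_sum_le (Δ k : ℕ) (hΔ : 2 ≤ Δ) : ∑ j ∈ Finset.range k, Δ ^ j ≤ Δ ^ k - 1 := by
  induction k with
  | zero => simp
  | succ n ih =>
    rw [Finset.sum_range_succ]
    have h1 : 1 ≤ Δ ^ n := Nat.one_le_pow _ _ (by omega)
    have h2 : 2 * Δ ^ n ≤ Δ ^ (n + 1) := by
      calc 2 * Δ ^ n ≤ Δ * Δ ^ n := Nat.mul_le_mul_right _ hΔ
        _ = Δ ^ (n + 1) := by ring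
    omega

/-- ball of radius `k` around `u`. -/
noncomputable def gball (u : V) (k : ℕ) : Finset V :=
  Finset.univ.filter (fun v => ∃ p : G.Walk u v, p.length ≤ k)

lemma gball_card_le (Δ d k : ℕ) (hΔ : 2 ≤ Δ) (hd : 1 ≤ d) (hk : 1 ≤ k)
    (hmax : ∀ v : V, Nat.card (G.neighborSet v) ≤ Δ)
    (u : V) (hu : Nat.card (G.neighborSet u) ≤ d) :
    (gball G u k).card ≤ d * Δ ^ k := by
  have hsub : gball G u k ⊆ (Finset.range (k + 1)).biUnion (fun i => sph G u i) := by
    intro v hv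
    simp only [gball, Finset.mem_filter, Finset.mem_univ, true_and] at hv
    obtain ⟨p, hp⟩ := hv
    refine Finset.mem_biUnion.2 ⟨p.length, Finset.mem_range.2 (by omega), ?_⟩
    simp only [sph, Finset.mem_filter, Finset.mem_univ, true_and]
    exact ⟨p, rfl⟩
  have h1 : (gball G u k).card ≤ ∑ i ∈ Finset.range (k + 1), (sph G u i).card :=
    le_trans (Finset.card_le_card hsub) Finset.card_biUnion_le
  have h2 : ∑ i ∈ Finset.range (k + 1), (sph G u i).card
      ≤ 1 + ∑ j ∈ Finset.range k, d * Δ ^ j := by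
    rw [Finset.sum_range_succ']
    rw [sph_zero]
    simp only [Finset.card_singleton]
    rw [add_comm]
    gcongr 1 + ?_
    apply Finset.sum_le_sum
    intro j _
    have := sph_card_le G Δ d hmax u hu (j + 1) (by omega)
    simpa using this
  have h3 : ∑ j ∈ Finset.range k, d * Δ ^ j ≤ d * (Δ ^ k - 1) := by
    rw [← Finset.mul_sum]
    exact Nat.mul_le_mul_left d (geom_sum_le Δ k hΔ)
  have hx : 1 ≤ Δ ^ k := Nat.one_le_pow _ _ (by omega)
  have h4 : d * (Δ ^ k - 1) = d * Δ ^ k - d := by rw [Nat.mul_sub, mul_one]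
  have h5 : d ≤ d * Δ ^ k := Nat.le_mul_of_pos_right d (by omega)
  omega

end Aux

/-- **Lemma 6 (independent sets made of small-degree vertices).** If `G` is a graph on
`n` vertices with maximum degree at most `Δ ≥ 2` and `d·n ≥ 2·|E(G)|`, then for
every positive integer `k` there is a `k`-independent set `U` of vertices of
degree at most `d` with `|U| ≥ n / ((d+1)·d·Δ^k)`. -/
theorem exists_kIndep_set_of_small_degree_vertices
    {V : Type*} [Fintype V] (G : SimpleGraph V) (Δ d k : ℕ)
    (hΔ : 2 ≤ Δ) (hd : 1 ≤ d) (hk : 1 ≤ k)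
    (hmax : ∀ v : V, Nat.card (G.neighborSet v) ≤ Δ)
    (hEdges : 2 * edgeCount G ≤ d * Fintype.card V) :
    ∃ U : Finset V, KIndep G k (U : Set V) ∧
      (∀ v ∈ U, Nat.card (G.neighborSet v) ≤ d) ∧
      (Fintype.card V : ℝ) / (((d : ℝ) + 1) * (d : ℝ) * (Δ : ℝ) ^ k) ≤ (U.card : ℝ) := by
  haveI : DecidableRel G.Adj := fun _ _ => Classical.propDecidable _
  set n := Fintype.card V with hn
  -- the set of small-degree vertices
  set D : Finset V := Finset.univ.filter (fun v => Nat.card (G.neighborSet v) ≤ d) with hD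
  have hdeg : ∀ v : V, Nat.card (G.neighborSet v) = G.degree v := by
    intro v
    rw [Nat.card_eq_fintype_card, G.card_neighborSet_eq_degree]
  -- handshake counting: n ≤ (d+1) * D.card
  have hhand : n ≤ (d + 1) * D.card := by
    have hsum : ∑ v : V, G.degree v = 2 * edgeCount G := by
      rw [G.sum_degrees_eq_twice_card_edges]
      congr 1
      rw [edgeCount, Nat.card_eq_fintype_card, SimpleGraph.edgeFinset, Set.toFinset_card]
    have hsplit : ∑ v : V, G.degree v = ∑ v ∈ D, G.degree v + ∑ v ∈ Dᶜ, G.degree v :=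
      (Finset.sum_add_sum_compl D _).symm
    have hlow : (d + 1) * Dᶜ.card ≤ ∑ v ∈ Dᶜ, G.degree v := by
      calc (d + 1) * Dᶜ.card = ∑ _v ∈ Dᶜ, (d + 1) := by
              rw [Finset.sum_const, smul_eq_mul, mul_comm]
        _ ≤ ∑ v ∈ Dᶜ, G.degree v := by
              apply Finset.sum_le_sum
              intro v hv
              simp only [hD, Finset.mem_compl, Finset.mem_filter, Finset.mem_univ, true_and,
                not_le] at hv
              rw [← hdeg]; omega
    have hcard : D.card + Dᶜ.card = n := by
      rw [Finset.card_add_card_compl]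
    have h1 : (d + 1) * Dᶜ.card ≤ d * n := by
      calc (d + 1) * Dᶜ.card ≤ ∑ v ∈ Dᶜ, G.degree v := hlow
        _ ≤ ∑ v : V, G.degree v := by rw [hsplit]; omega
        _ = 2 * edgeCount G := hsum
        _ ≤ d * n := hEdges
    -- from (d+1)(n - m) ≤ d n deduce n ≤ (d+1) m
    nlinarith [hcard, h1]
  -- maximal k-independent subset of D
  have hne : (Finset.filter (fun U : Finset V => KIndep G k ↑U) D.powerset).Nonempty := by
    refine ⟨∅, ?_⟩
    simp only [Finset.mem_filter, Finset.mem_powerset]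
    exact ⟨Finset.empty_subset _, fun u hu => by simp at hu⟩
  obtain ⟨U, hUmem, hUmax⟩ : ∃ U ∈ Finset.filter (fun U : Finset V => KIndep G k ↑U) D.powerset,
      ∀ x ∈ Finset.filter (fun U : Finset V => KIndep G k ↑U) D.powerset, ¬ U < x := by
    obtain ⟨m, hm⟩ := Finset.exists_maximal hne
    exact ⟨m, hm.1, fun x hx hlt => lt_irrefl _ (lt_of_lt_of_le hlt (hm.2 hx hlt.le))⟩
  simp only [Finset.mem_filter, Finset.mem_powerset] at hUmem
  obtain ⟨hUD, hUind⟩ := hUmem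
  have hUd : ∀ v ∈ U, Nat.card (G.neighborSet v) ≤ d := by
    intro v hv
    have := hUD hv
    simp only [hD, Finset.mem_filter, Finset.mem_univ, true_and] at this
    exact this
  refine ⟨U, hUind, hUd, ?_⟩
  -- every vertex of D is within distance k of some vertex of U
  have hcover : ∀ w ∈ D, ∃ u ∈ U, ∃ p : G.Walk u w, p.length ≤ k := by
    intro w hw
    by_cases hwU : w ∈ U
    · exact ⟨w, hwU, SimpleGraph.Walk.nil, by simp⟩
    · by_contra hcon
      push_neg at hcon
      -- then insert w U would be k-independent, contradicting maximality
      have hlt : U < insert w U := Finset.ssubset_insert hwU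
      have hmem : insert w U ∈ Finset.filter (fun U : Finset V => KIndep G k ↑U) D.powerset := by
        simp only [Finset.mem_filter, Finset.mem_powerset]
        constructor
        · exact Finset.insert_subset hw hUD
        · intro a ha b hb hab W
          simp only [Finset.coe_insert, Set.mem_insert_iff, Finset.mem_coe] at ha hb
          rcases ha with rfl | ha
          · rcases hb with rfl | hb
            · exact absurd rfl hab
            · have := hcon b hb W.reverse
              rwa [SimpleGraph.Walk.length_reverse] at this
          · rcases hb with rfl | hb
            · exact hcon a ha W
            · exact hUind a ha b hb hab W
      exact hUmax _ hmem hlt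
  -- D is covered by balls of radius k around U
  have hDsub : D ⊆ U.biUnion (fun u => gball G u k) := by
    intro w hw
    obtain ⟨u, hu, p, hp⟩ := hcover w hw
    exact Finset.mem_biUnion.2 ⟨u, hu, by
      simp only [gball, Finset.mem_filter, Finset.mem_univ, true_and]
      exact ⟨p, hp⟩⟩
  have hDcard : D.card ≤ U.card * (d * Δ ^ k) := by
    calc D.card ≤ (U.biUnion (fun u => gball G u k)).card := Finset.card_le_card hDsub
      _ ≤ ∑ u ∈ U, (gball G u k).card := Finset.card_biUnion_le
      _ ≤ ∑ _u ∈ U, d * Δ ^ k := Finset.sum_le_sum (fun u hu =>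
          gball_card_le G Δ d k hΔ hd hk hmax u (hUd u hu))
      _ = U.card * (d * Δ ^ k) := by rw [Finset.sum_const, smul_eq_mul]
  -- combine
  have hfinal : n ≤ U.card * ((d + 1) * (d * Δ ^ k)) := by
    calc n ≤ (d + 1) * D.card := hhand
      _ ≤ (d + 1) * (U.card * (d * Δ ^ k)) := Nat.mul_le_mul_left _ hDcard
      _ = U.card * ((d + 1) * (d * Δ ^ k)) := by ring
  have hpos : (0 : ℝ) < ((d : ℝ) + 1) * (d : ℝ) * (Δ : ℝ) ^ k := by
    have : (0 : ℝ) < (Δ : ℝ) ^ k := pow_pos (by exact_mod_cast by omega : (0:ℝ) < Δ) k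
    have hd' : (0 : ℝ) < (d : ℝ) := by exact_mod_cast hd
    positivity
  rw [div_le_iff₀ hpos]
  have := (Nat.cast_le (α := ℝ)).2 hfinal
  push_cast at this
  calc (n : ℝ) ≤ (U.card : ℝ) * (((d : ℝ) + 1) * ((d : ℝ) * (Δ : ℝ) ^ k)) := this
    _ = (U.card : ℝ) * (((d : ℝ) + 1) * (d : ℝ) * (Δ : ℝ) ^ k) := by ring
end
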